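/- Fix α ∈ [0,1), γ ∈ (0,1), q > 0 and n̄₁ > 1, and let N_k = N_k(n̄₁) be the constant-flux steady state. Then for every k ≥ 1 one has Q_k < N_k ≤ Q_k n̄₁^k, with N_1 = Q_1 n̄₁ and with the upper inequality strict for every k ≥ 2; in words, the constant-flux steady state lies strictly between the subcritical equilibrium Q_k and the supercritical zero-flux profile Q_k n̄₁^k. -/

import Mathlib

/-- Attachment rate `a_k = k^α`. -/
noncomputable def a (α : ℝ) (k : ℕ) : ℝ := (k : ℝ) ^ α

/-- Detachment rate `b_k = k^α (1 + q k^{−γ})`. -/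
noncomputable def b (α γ q : ℝ) (k : ℕ) : ℝ := (k : ℝ) ^ α * (1 + q * (k : ℝ) ^ (-γ))

/-- Equilibrium coefficients `Q_1 = 1`, `Q_k = ∏_{l=1}^{k−1} a_l / b_{l+1}`. -/
noncomputable def Q (α γ q : ℝ) (k : ℕ) : ℝ :=
  ∏ l ∈ Finset.Icc 1 (k - 1), a α l / b α γ q (l + 1)

/-- Summand `c_l = 1/(a_l Q_l n̄₁^{l+1})` (used for `l ≥ 1`). -/
noncomputable def c (α γ q n₁ : ℝ) (l : ℕ) : ℝ :=
  1 / (a α l * Q α γ q l * n₁ ^ (l + 1))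

/-- Constant flux `J(n̄₁) = (∑_{l=1}^∞ 1/(a_l Q_l n̄₁^{l+1}))⁻¹`. -/
noncomputable def J (α γ q n₁ : ℝ) : ℝ := (∑' i : ℕ, c α γ q n₁ (1 + i))⁻¹

/-- Constant-flux steady state
`N_k(n̄₁) = J(n̄₁) Q_k n̄₁^k ∑_{l=k}^∞ 1/(a_l Q_l n̄₁^{l+1})`. -/
noncomputable def N (α γ q n₁ : ℝ) (k : ℕ) : ℝ :=
  J α γ q n₁ * Q α γ q k * n₁ ^ k * ∑' i : ℕ, c α γ q n₁ (k + i)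

open Finset Filter Topology

lemma a_pos' {α : ℝ} {l : ℕ} (hl : 1 ≤ l) : 0 < a α l :=
  Real.rpow_pos_of_pos (by exact_mod_cast hl) α

lemma one_add_pos' {γ q : ℝ} (hq : 0 < q) {l : ℕ} (hl : 1 ≤ l) :
    1 < 1 + q * (l : ℝ) ^ (-γ) := by
  have h0 : (0:ℝ) < l := by exact_mod_cast hl
  nlinarith [mul_pos hq (Real.rpow_pos_of_pos h0 (-γ))]

lemma b_pos' {α γ q : ℝ} (hq : 0 < q) {l : ℕ} (hl : 1 ≤ l) : 0 < b α γ q l := by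
  have h1 := one_add_pos' (γ := γ) hq hl
  have ha := a_pos' (α := α) hl
  unfold b; unfold a at ha; nlinarith

lemma Q_pos' {α γ q : ℝ} (hq : 0 < q) (k : ℕ) : 0 < Q α γ q k := by
  unfold Q
  refine Finset.prod_pos fun l hl => ?_
  have hl1 : 1 ≤ l := (Finset.mem_Icc.mp hl).1
  exact div_pos (a_pos' hl1) (b_pos' hq (by omega))

lemma Q_succ' {α γ q : ℝ} {l : ℕ} (hl : 1 ≤ l) :
    Q α γ q (l + 1) = Q α γ q l * (a α l / b α γ q (l + 1)) := by
  unfold Q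
  have h : l + 1 - 1 = (l - 1) + 1 := by omega
  rw [h, Finset.prod_Icc_succ_top (by omega), Nat.sub_add_cancel hl]

lemma aQ_succ' {α γ q : ℝ} (hq : 0 < q) {l : ℕ} (hl : 1 ≤ l) :
    a α (l + 1) * Q α γ q (l + 1) =
      (a α l * Q α γ q l) / (1 + q * ((l + 1 : ℕ) : ℝ) ^ (-γ)) := by
  have hy : (1:ℝ) < 1 + q * ((l + 1 : ℕ) : ℝ) ^ (-γ) := one_add_pos' hq (by omega)
  have hx : (0:ℝ) < a α (l + 1) := a_pos' (by omega)
  rw [Q_succ' hl]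
  have hbb : b α γ q (l + 1) = a α (l + 1) * (1 + q * ((l + 1 : ℕ) : ℝ) ^ (-γ)) := rfl
  rw [hbb]
  field_simp

lemma aQ_pos' {α γ q : ℝ} (hq : 0 < q) {l : ℕ} (hl : 1 ≤ l) :
    0 < a α l * Q α γ q l := mul_pos (a_pos' hl) (Q_pos' hq l)

lemma aQ_anti' {α γ q : ℝ} (hq : 0 < q) {m n : ℕ} (hm : 1 ≤ m) (hmn : m ≤ n) :
    a α n * Q α γ q n ≤ a α m * Q α γ q m := by
  induction n, hmn using Nat.le_induction with
  | base => exact le_refl _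
  | succ n hn ih =>
    have h1 : 1 ≤ n := le_trans hm hn
    calc a α (n+1) * Q α γ q (n+1)
        = (a α n * Q α γ q n) / (1 + q * ((n + 1 : ℕ) : ℝ) ^ (-γ)) := aQ_succ' hq h1
      _ ≤ a α n * Q α γ q n := by
          have hy := one_add_pos' (γ := γ) (q := q) hq (l := n+1) (by omega)
          exact div_le_self (le_of_lt (aQ_pos' hq h1)) (le_of_lt hy)
      _ ≤ a α m * Q α γ q m := ih

lemma c_pos' {α γ q n₁ : ℝ} (hq : 0 < q) (hn₁ : 1 < n₁) {l : ℕ} (hl : 1 ≤ l) :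
    0 < c α γ q n₁ l := by
  have h1 : (0:ℝ) < n₁ := lt_trans one_pos hn₁
  exact one_div_pos.mpr (mul_pos (aQ_pos' hq hl) (pow_pos h1 _))

lemma c_succ' {α γ q n₁ : ℝ} (hq : 0 < q) (hn₁ : 1 < n₁) {l : ℕ} (hl : 1 ≤ l) :
    c α γ q n₁ (l + 1) =
      c α γ q n₁ l * ((1 + q * ((l + 1 : ℕ) : ℝ) ^ (-γ)) / n₁) := by
  have h1 : (0:ℝ) < n₁ := lt_trans one_pos hn₁
  have hy : (1:ℝ) < 1 + q * ((l + 1 : ℕ) : ℝ) ^ (-γ) := one_add_pos' hq (by omega)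
  have hd : (0:ℝ) < a α l * Q α γ q l := aQ_pos' hq hl
  unfold c
  rw [aQ_succ' hq hl]
  rw [pow_succ]
  rw [div_mul_eq_mul_div, one_div_div, div_mul_div_comm, one_mul, ← mul_assoc]

lemma c_summable' {α γ q n₁ : ℝ} (hγ0 : 0 < γ) (hq : 0 < q) (hn₁ : 1 < n₁) :
    Summable (fun i : ℕ => c α γ q n₁ (1 + i)) := by
  have h1 : (0:ℝ) < n₁ := lt_trans one_pos hn₁
  apply summable_of_ratio_test_tendsto_lt_one (l := 1 / n₁)
  · rw [div_lt_one h1]; exact hn₁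
  · exact Filter.Eventually.of_forall fun n => ne_of_gt (c_pos' hq hn₁ (by omega))
  · have heq : (fun n : ℕ => ‖c α γ q n₁ (1 + (n + 1))‖ / ‖c α γ q n₁ (1 + n)‖)
        = fun n : ℕ => (1 + q * ((n + 2 : ℕ) : ℝ) ^ (-γ)) / n₁ := by
      funext n
      have h1n : 1 + (n + 1) = (1 + n) + 1 := by omega
      rw [h1n, c_succ' hq hn₁ (by omega)]
      have hc := c_pos' (α := α) (γ := γ) hq hn₁ (l := 1 + n) (by omega)
      have hy : (0:ℝ) < 1 + q * ((1 + n + 1 : ℕ) : ℝ) ^ (-γ) :=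
        lt_trans one_pos (one_add_pos' hq (by omega))
      rw [Real.norm_eq_abs, Real.norm_eq_abs, abs_of_pos hc,
        abs_of_pos (mul_pos hc (div_pos hy h1))]
      rw [show (1 + n + 1 : ℕ) = n + 2 from by omega]
      rw [mul_comm (c α γ q n₁ (1 + n)), mul_div_assoc, div_self (ne_of_gt hc), mul_one]
    rw [heq]
    have h0 : Tendsto (fun n : ℕ => ((n + 2 : ℕ) : ℝ) ^ (-γ)) atTop (𝓝 0) := by
      apply (tendsto_rpow_neg_atTop hγ0).comp
      exact tendsto_natCast_atTop_atTop.comp (tendsto_add_atTop_nat 2)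
    have := ((h0.const_mul q).const_add 1).div_const n₁
    simpa using this

/-- The constant-flux steady state lies strictly between the subcritical
equilibrium `Q_k` and the supercritical zero-flux profile `Q_k n̄₁^k`:
`Q_k < N_k ≤ Q_k n̄₁^k` for `k ≥ 1`, with `N_1 = Q_1 n̄₁` and strict upper
inequality for `k ≥ 2`. -/
theorem stmt19 (α γ q n₁ : ℝ) (hα0 : 0 ≤ α) (hα1 : α < 1)
    (hγ0 : 0 < γ) (hγ1 : γ < 1) (hq : 0 < q) (hn₁ : 1 < n₁) :
    (∀ k : ℕ, 1 ≤ k →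
        Q α γ q k < N α γ q n₁ k ∧ N α γ q n₁ k ≤ Q α γ q k * n₁ ^ k) ∧
      N α γ q n₁ 1 = Q α γ q 1 * n₁ ∧
      ∀ k : ℕ, 2 ≤ k → N α γ q n₁ k < Q α γ q k * n₁ ^ k := by
  have h1 : (0:ℝ) < n₁ := lt_trans one_pos hn₁
  set f : ℕ → ℝ := fun i => c α γ q n₁ (1 + i) with hf_def
  have hf : Summable f := c_summable' hγ0 hq hn₁
  -- the tails
  set S : ℕ → ℝ := fun k => ∑' i : ℕ, c α γ q n₁ (k + i) with hS_def
  have hS_eq : ∀ k : ℕ, 1 ≤ k → (fun i : ℕ => c α γ q n₁ (k + i))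
      = fun i : ℕ => f (i + (k - 1)) := by
    intro k hk
    funext i
    simp only [hf_def]
    congr 1
    omega
  have hSk : ∀ k : ℕ, 1 ≤ k → Summable (fun i : ℕ => c α γ q n₁ (k + i)) := by
    intro k hk
    rw [hS_eq k hk]
    exact (summable_nat_add_iff (k - 1)).mpr hf
  have hS1f : S 1 = ∑' i : ℕ, f i := by
    simp only [hS_def, hf_def]
  have hSpos : ∀ k : ℕ, 1 ≤ k → 0 < S k := by
    intro k hk
    exact Summable.tsum_pos (hSk k hk) (fun i => le_of_lt (c_pos' hq hn₁ (by omega))) 0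
      (c_pos' hq hn₁ (by omega))
  have hS1pos : 0 < S 1 := hSpos 1 le_rfl
  have hJ : J α γ q n₁ = (S 1)⁻¹ := rfl
  have hJpos : 0 < J α γ q n₁ := by rw [hJ]; exact inv_pos.mpr hS1pos
  have hJS1 : J α γ q n₁ * S 1 = 1 := by rw [hJ]; exact inv_mul_cancel₀ (ne_of_gt hS1pos)
  have hN : ∀ k : ℕ, N α γ q n₁ k = J α γ q n₁ * Q α γ q k * n₁ ^ k * S k := fun k => rfl
  -- upper bound: S k ≤ S 1, strict for k ≥ 2
  have htail : ∀ k : ℕ, 1 ≤ k → (∑ i ∈ Finset.range (k - 1), f i) + S k = S 1 := by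
    intro k hk
    rw [hS1f]
    have : S k = ∑' i : ℕ, f (i + (k - 1)) := by
      simp only [hS_def]; rw [hS_eq k hk]
    rw [this]
    exact Summable.sum_add_tsum_nat_add (k - 1) hf
  have hSle : ∀ k : ℕ, 1 ≤ k → S k ≤ S 1 := by
    intro k hk
    have h := htail k hk
    have hnn : 0 ≤ ∑ i ∈ Finset.range (k - 1), f i :=
      Finset.sum_nonneg fun i _ => le_of_lt (c_pos' hq hn₁ (by omega))
    linarith
  have hSlt : ∀ k : ℕ, 2 ≤ k → S k < S 1 := by
    intro k hk
    have h := htail k (by omega)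
    have hmem : 0 ∈ Finset.range (k - 1) := Finset.mem_range.mpr (by omega)
    have hpos : 0 < ∑ i ∈ Finset.range (k - 1), f i :=
      Finset.sum_pos' (fun i _ => le_of_lt (c_pos' hq hn₁ (by omega)))
        ⟨0, hmem, c_pos' hq hn₁ (by omega)⟩
    linarith
  -- lower bound: S 1 < n₁ ^ k * S k
  have hkey : ∀ k : ℕ, 1 ≤ k → S 1 < n₁ ^ k * S k := by
    intro k hk
    have hg : Summable (fun i : ℕ => n₁ ^ k * c α γ q n₁ (k + i)) := (hSk k hk).mul_left _
    have hterm : ∀ i : ℕ, f i < n₁ ^ k * c α γ q n₁ (k + i) := by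
      intro i
      have hd1 : 0 < a α (1 + i) * Q α γ q (1 + i) := aQ_pos' hq (by omega)
      have hdk : 0 < a α (k + i) * Q α γ q (k + i) := aQ_pos' hq (by omega)
      have hdle : a α (k + i) * Q α γ q (k + i) ≤ a α (1 + i) * Q α γ q (1 + i) :=
        aQ_anti' hq (by omega) (by omega)
      have hrhs : n₁ ^ k * c α γ q n₁ (k + i)
          = 1 / (a α (k + i) * Q α γ q (k + i) * n₁ ^ (i + 1)) := by
        unfold c
        have hpow : n₁ ^ (k + i + 1) = n₁ ^ k * n₁ ^ (i + 1) := by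
          ring
        rw [hpow]
        field_simp
        try ring
      have hlhs : f i = 1 / (a α (1 + i) * Q α γ q (1 + i) * n₁ ^ (i + 2)) := by
        simp only [hf_def]
        unfold c
        rw [show 1 + i + 1 = i + 2 from by omega]
      rw [hrhs, hlhs]
      apply one_div_lt_one_div_of_lt (mul_pos hdk (pow_pos h1 _))
      calc a α (k + i) * Q α γ q (k + i) * n₁ ^ (i + 1)
          ≤ a α (1 + i) * Q α γ q (1 + i) * n₁ ^ (i + 1) :=
            mul_le_mul_of_nonneg_right hdle (le_of_lt (pow_pos h1 _))
        _ < a α (1 + i) * Q α γ q (1 + i) * n₁ ^ (i + 2) := by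
            apply mul_lt_mul_of_pos_left _ hd1
            exact pow_lt_pow_right₀ hn₁ (by omega)
    have hsum : (∑' i : ℕ, f i) < ∑' i : ℕ, n₁ ^ k * c α γ q n₁ (k + i) :=
      Summable.tsum_lt_tsum_of_nonneg (fun i => le_of_lt (c_pos' hq hn₁ (by omega)))
        (fun i => le_of_lt (hterm i)) (hterm 0) hg
    rw [← hS1f] at hsum
    calc S 1 < ∑' i : ℕ, n₁ ^ k * c α γ q n₁ (k + i) := hsum
      _ = n₁ ^ k * S k := tsum_mul_left
  refine ⟨fun k hk => ⟨?_, ?_⟩, ?_, fun k hk => ?_⟩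
  · -- Q k < N k
    have hQk := Q_pos' (α := α) (γ := γ) hq k
    have := hkey k hk
    calc Q α γ q k = Q α γ q k * (J α γ q n₁ * S 1) := by rw [hJS1, mul_one]
      _ < Q α γ q k * (J α γ q n₁ * (n₁ ^ k * S k)) := by
          apply mul_lt_mul_of_pos_left _ hQk
          exact mul_lt_mul_of_pos_left this hJpos
      _ = N α γ q n₁ k := by rw [hN k]; ring
  · -- N k ≤ Q k n₁^k
    have hQk := Q_pos' (α := α) (γ := γ) hq k
    have hle := hSle k hk
    calc N α γ q n₁ k = Q α γ q k * n₁ ^ k * (J α γ q n₁ * S k) := by rw [hN k]; ring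
      _ ≤ Q α γ q k * n₁ ^ k * (J α γ q n₁ * S 1) := by
          apply mul_le_mul_of_nonneg_left _ (le_of_lt (mul_pos hQk (pow_pos h1 k)))
          exact mul_le_mul_of_nonneg_left hle (le_of_lt hJpos)
      _ = Q α γ q k * n₁ ^ k := by rw [hJS1, mul_one]
  · -- N 1 = Q 1 n₁
    calc N α γ q n₁ 1 = Q α γ q 1 * n₁ ^ 1 * (J α γ q n₁ * S 1) := by rw [hN 1]; ring
      _ = Q α γ q 1 * n₁ := by rw [hJS1, mul_one, pow_one]
  · -- strict upper for k ≥ 2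
    have hQk := Q_pos' (α := α) (γ := γ) hq k
    have hlt := hSlt k hk
    calc N α γ q n₁ k = Q α γ q k * n₁ ^ k * (J α γ q n₁ * S k) := by rw [hN k]; ring
      _ < Q α γ q k * n₁ ^ k * (J α γ q n₁ * S 1) := by
          apply mul_lt_mul_of_pos_left _ (mul_pos hQk (pow_pos h1 k))
          exact mul_lt_mul_of_pos_left hlt hJpos
      _ = Q α γ q k * n₁ ^ k := by rw [hJS1, mul_one]
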